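/- The numerator of the even-length palindromic continued fraction [a_n,...,a_2,a_1,a_1,a_2,...,a_n] equals p_n² + q_n², where p_n/q_n = [a_1,...,a_n] with p_n, q_n the standard numerator and denominator of the n-th convergent. -/

import Mathlib

/-- The continuant: `cont [a₁,...,aₙ]` is the numerator N[a₁,...,aₙ] of the
continued fraction [a₁,...,aₙ], with N[] = 1. -/
def cont : List ℕ → ℕ
  | [] => 1
  | [a] => a
  | a :: b :: l => a * cont (b :: l) + cont l

theorem cont_append : ∀ (l m : List ℕ), m ≠ [] → l ≠ [] →
    cont (l ++ m) = cont l * cont m + cont l.dropLast * cont m.tail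
  | [], _, _, h => absurd rfl h
  | [a], b :: m, _, _ => by simp [cont]
  | [a, x], b :: m, _, _ => by simp [cont]; ring
  | a :: x :: y :: l, m, hm, _ => by
      have h1 := cont_append (x :: y :: l) m hm (by simp)
      have h2 := cont_append (y :: l) m hm (by simp)
      simp only [List.cons_append] at *
      rw [cont, h1, h2, cont, cont]
      simp only [List.dropLast_cons₂]
      rw [cont, cont]
      ring

theorem cont_concat (l : List ℕ) (hl : l ≠ []) (x : ℕ) :
    cont (l ++ [x]) = x * cont l + cont l.dropLast := by
  rw [cont_append l [x] (by simp) hl]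
  simp [cont]; ring

theorem reverse_dropLast (l : List ℕ) : l.reverse.dropLast = l.tail.reverse := by
  have h := List.tail_reverse (l := l.reverse)
  simp only [List.reverse_reverse] at h
  rw [h, List.reverse_reverse]

theorem cont_reverse : ∀ l : List ℕ, cont l.reverse = cont l
  | [] => rfl
  | [a] => rfl
  | a :: b :: l => by
      have h := cont_reverse (b :: l)
      have h2 := cont_reverse l
      rw [cont, List.reverse_cons, cont_concat _ (by simp) a, h]
      congr 1
      rw [reverse_dropLast, List.tail_cons, h2]

theorem stmt4 (l : List ℕ) (hl : l ≠ []) (hpos : ∀ x ∈ l, 0 < x) :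
    cont (l.reverse ++ l) = (cont l) ^ 2 + (cont l.tail) ^ 2 := by
  rw [cont_append _ _ hl (by simpa using hl), cont_reverse,
    reverse_dropLast, cont_reverse]
  ring
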